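/- Conjugate of the linear-programming value function (claim in the proof of Theorem 6). Let N, J, S be positive natural numbers, W0 : Matrix (Fin S) (Fin J) ℝ, R : Fin S → ℝ, Q : Matrix (Fin J) (Fin N) ℝ, q : Fin J → ℝ, and z : Fin N → ℝ. Let X := { x : Fin J → ℝ | ∀ s, R s ≤ (W0.mulVec x) s } and assume X is nonempty and compact. Then, in the extended reals, ⨆ (ξ : Fin N → ℝ), (((∑ n, z n * ξ n) + sInf { ∑ j, ((Q.mulVec ξ) j + q j) * x j | x ∈ X } : ℝ) : EReal) = sInf { ((∑ j, q j * x j : ℝ) : EReal) | x ∈ X ∧ Qᵀ.mulVec x = -z }, where the right-hand infimum is ⊤ when no x ∈ X satisfies Qᵀ.mulVec x = -z (Qᵀ denotes the transpose of Q). -/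
import Mathlib
open Matrix
open scoped BigOperators Pointwise

theorem lp_aux_key {N J : ℕ} (Q : Matrix (Fin J) (Fin N) ℝ) (q : Fin J → ℝ)
    (ξ : Fin N → ℝ) (x : Fin J → ℝ) :
    ∑ j, (Q.mulVec ξ j + q j) * x j
      = (∑ n, Qᵀ.mulVec x n * ξ n) + ∑ j, q j * x j := by
  simp only [Matrix.mulVec, dotProduct, Matrix.transpose_apply, add_mul,
    Finset.sum_add_distrib, Finset.sum_mul]
  congr 1
  rw [Finset.sum_comm]
  exact Finset.sum_congr rfl fun j _ => Finset.sum_congr rfl fun n _ => by ring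

/-- dot product as a linear map -/
def lpDotL {J : ℕ} (q : Fin J → ℝ) : (Fin J → ℝ) →ₗ[ℝ] ℝ where
  toFun x := ∑ j, q j * x j
  map_add' x y := by simp [mul_add, Finset.sum_add_distrib]
  map_smul' c x := by simp [Finset.mul_sum, smul_eq_mul, mul_left_comm]

def lpPhiL {N J : ℕ} (Q : Matrix (Fin J) (Fin N) ℝ) (q : Fin J → ℝ) :
    (Fin J → ℝ) →ₗ[ℝ] (Fin N → ℝ) × ℝ :=
  (Matrix.mulVecLin Qᵀ).prod (lpDotL q)

theorem lpPhiL_apply {N J : ℕ} (Q : Matrix (Fin J) (Fin N) ℝ) (q : Fin J → ℝ)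
    (x : Fin J → ℝ) : lpPhiL Q q x = (Qᵀ.mulVec x, ∑ j, q j * x j) := rfl

theorem lp_repr {N : ℕ} (f : ((Fin N → ℝ) × ℝ) →L[ℝ] ℝ) (v : Fin N → ℝ) (r : ℝ) :
    f (v, r) = (∑ n, v n * f (Pi.single n 1, 0)) + r * f (0, 1) := by
  have hv : (v, r) = (∑ n, v n • ((Pi.single n (1:ℝ) : Fin N → ℝ), (0:ℝ)))
      + r • ((0 : Fin N → ℝ), (1:ℝ)) := by
    ext k
    · simp [Prod.fst_sum, Finset.sum_apply, Pi.single_apply, Finset.sum_ite_eq]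
    · simp [Prod.snd_sum]
  rw [hv, map_add, map_sum]
  simp only [_root_.map_smul, smul_eq_mul]

theorem lp_value_function_conjugate
    (N J S : ℕ) (hN : 0 < N) (hJ : 0 < J) (hS : 0 < S)
    (W0 : Matrix (Fin S) (Fin J) ℝ) (R : Fin S → ℝ)
    (Q : Matrix (Fin J) (Fin N) ℝ) (q : Fin J → ℝ) (z : Fin N → ℝ)
    (hXne : { x : Fin J → ℝ | ∀ s, R s ≤ W0.mulVec x s }.Nonempty)
    (hXcomp : IsCompact { x : Fin J → ℝ | ∀ s, R s ≤ W0.mulVec x s }) :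
    let X : Set (Fin J → ℝ) := { x | ∀ s, R s ≤ W0.mulVec x s }
    (⨆ (ξ : Fin N → ℝ),
        ((((∑ n, z n * ξ n)
            + sInf { c : ℝ | ∃ x ∈ X, c = ∑ j, (Q.mulVec ξ j + q j) * x j } : ℝ)) : EReal))
      = sInf { c : EReal | ∃ x ∈ X, Qᵀ.mulVec x = -z ∧
          c = ((∑ j, q j * x j : ℝ) : EReal) } := by
  intro X
  -- basic facts
  have cont1 : ∀ a : Fin J → ℝ, Continuous fun x : Fin J → ℝ => ∑ j, a j * x j :=
    fun a => continuous_finset_sum _ fun j _ => continuous_const.mul (continuous_apply j)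
  have hSetEq : ∀ a : Fin J → ℝ,
      {c : ℝ | ∃ x ∈ X, c = ∑ j, a j * x j} = (fun x => ∑ j, a j * x j) '' X := by
    intro a; ext c; simp [eq_comm]
  have hBdd : ∀ a : Fin J → ℝ, BddBelow {c : ℝ | ∃ x ∈ X, c = ∑ j, a j * x j} := by
    intro a; rw [hSetEq a]; exact (hXcomp.image (cont1 a)).bddBelow
  have hSne : ∀ a : Fin J → ℝ, {c : ℝ | ∃ x ∈ X, c = ∑ j, a j * x j}.Nonempty := by
    intro a; obtain ⟨x0, hx0⟩ := hXne; exact ⟨_, x0, hx0, rfl⟩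
  have hXconv : Convex ℝ X := by
    have hX : X = ⋂ s, {x : Fin J → ℝ | R s ≤ W0.mulVec x s} := by
      ext x; simp [X, Set.mem_iInter]
    rw [hX]
    refine convex_iInter fun s => convex_halfSpace_ge ?_ (R s)
    constructor
    · intro x y; simp [Matrix.mulVec_add]
    · intro c x; simp [Matrix.mulVec_smul]
  -- the closing argument
  have hclose : ∀ (α : ℝ) (ξ : Fin N → ℝ),
      (∀ x ∈ X, α ≤ (∑ n, z n * ξ n) + ∑ j, (Q.mulVec ξ j + q j) * x j) →
      (α : EReal) ≤ ⨆ (ξ : Fin N → ℝ),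
        ((((∑ n, z n * ξ n)
            + sInf { c : ℝ | ∃ x ∈ X, c = ∑ j, (Q.mulVec ξ j + q j) * x j } : ℝ)) : EReal) := by
    intro α ξ hper
    have h1 : α - ∑ n, z n * ξ n
        ≤ sInf { c : ℝ | ∃ x ∈ X, c = ∑ j, (Q.mulVec ξ j + q j) * x j } := by
      refine le_csInf (hSne _) ?_
      rintro c ⟨x, hx, rfl⟩
      linarith [hper x hx]
    refine le_trans ?_ (le_iSup _ ξ)
    exact EReal.coe_le_coe_iff.mpr (by linarith)
  apply le_antisymm
  · -- easy direction
    refine iSup_le fun ξ => le_sInf ?_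
    rintro c ⟨x, hx, hfeas, rfl⟩
    rw [EReal.coe_le_coe_iff]
    have h1 : sInf { c : ℝ | ∃ x ∈ X, c = ∑ j, (Q.mulVec ξ j + q j) * x j }
        ≤ ∑ j, (Q.mulVec ξ j + q j) * x j := csInf_le (hBdd _) ⟨x, hx, rfl⟩
    have h2 : ∑ j, (Q.mulVec ξ j + q j) * x j
        = -(∑ n, z n * ξ n) + ∑ j, q j * x j := by
      rw [lp_aux_key, hfeas]
      simp [neg_mul, Finset.sum_neg_distrib, mul_comm]
    linarith
  · -- hard direction
    set RHS := sInf { c : EReal | ∃ x ∈ X, Qᵀ.mulVec x = -z ∧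
          c = ((∑ j, q j * x j : ℝ) : EReal) } with hRHS
    suffices H : ∀ α : ℝ, (α : EReal) < RHS → (α : EReal) ≤ ⨆ (ξ : Fin N → ℝ),
        ((((∑ n, z n * ξ n)
            + sInf { c : ℝ | ∃ x ∈ X, c = ∑ j, (Q.mulVec ξ j + q j) * x j } : ℝ)) : EReal) by
      by_contra hlt
      push_neg at hlt
      obtain ⟨α, h1, h2⟩ := EReal.exists_between_coe_real hlt
      exact absurd (H α h2) (not_le.2 h1)
    intro α hα
    -- the closed convex set D
    set D : Set ((Fin N → ℝ) × ℝ) :=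
      (lpPhiL Q q '' X) + (({0} : Set (Fin N → ℝ)) ×ˢ Set.Ici (0:ℝ)) with hD
    have hDclosed : IsClosed D :=
      IsClosed.add_left_of_isCompact (isClosed_singleton.prod isClosed_Ici)
        (hXcomp.image (lpPhiL Q q).continuous_of_finiteDimensional)
    have hDconv : Convex ℝ D :=
      (hXconv.linear_image (lpPhiL Q q)).add
        ((convex_singleton 0).prod (convex_Ici 0))
    have hnotin : (-z, α) ∉ D := by
      rintro ⟨p1, ⟨x, hx, rfl⟩, p2, hp2, hsum⟩
      obtain ⟨hp21, hp22⟩ := hp2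
      have h1 : Qᵀ.mulVec x = -z := by
        have := congrArg Prod.fst hsum
        simpa [lpPhiL_apply, Set.mem_singleton_iff.mp hp21] using this
      have h2 : (∑ j, q j * x j) ≤ α := by
        have := congrArg Prod.snd hsum
        simp only [lpPhiL_apply, Prod.snd_add] at this
        have : ∑ j, q j * x j + p2.2 = α := this
        linarith [Set.mem_Ici.mp hp22]
      have hmem : ((∑ j, q j * x j : ℝ) : EReal) ∈
          { c : EReal | ∃ x ∈ X, Qᵀ.mulVec x = -z ∧
            c = ((∑ j, q j * x j : ℝ) : EReal) } := ⟨x, hx, h1, rfl⟩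
      have := sInf_le hmem
      rw [← hRHS] at this
      exact absurd (lt_of_le_of_lt (le_trans this (EReal.coe_le_coe_iff.mpr h2)) hα)
        (lt_irrefl _)
    obtain ⟨f, u, hfD, hfu⟩ := geometric_hahn_banach_closed_point hDconv hDclosed hnotin
    set β : ℝ := f (0, 1) with hβdef
    set c : Fin N → ℝ := fun n => f (Pi.single n 1, 0) with hcdef
    have hrepr : ∀ (v : Fin N → ℝ) (r : ℝ), f (v, r) = (∑ n, v n * c n) + r * β :=
      fun v r => lp_repr f v r
    -- strict inequalities from separation
    have hmemD : ∀ x ∈ X, ∀ s : ℝ, 0 ≤ s →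
        (∑ n, Qᵀ.mulVec x n * c n) + (∑ j, q j * x j + s) * β < u := by
      intro x hx s hs
      have hmem : (Qᵀ.mulVec x, (∑ j, q j * x j) + s) ∈ D := by
        refine ⟨lpPhiL Q q x, ⟨x, hx, rfl⟩, ((0 : Fin N → ℝ), s), ⟨rfl, hs⟩, ?_⟩
        simp [lpPhiL_apply, Prod.ext_iff]
      have := hfD _ hmem
      rwa [hrepr] at this
    have hfu' : u < -(∑ n, z n * c n) + α * β := by
      have := hfu
      rw [hrepr] at this
      simpa [neg_mul, Finset.sum_neg_distrib] using this
    -- β ≤ 0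
    have hβle : β ≤ 0 := by
      by_contra hβpos
      push_neg at hβpos
      obtain ⟨x0, hx0⟩ := hXne
      set A0 := (∑ n, Qᵀ.mulVec x0 n * c n) + (∑ j, q j * x0 j) * β with hA0
      set s0 : ℝ := max 0 ((u - A0) / β + 1) with hs0
      have hs0nn : 0 ≤ s0 := le_max_left _ _
      have := hmemD x0 hx0 s0 hs0nn
      have hs0ge : (u - A0) / β + 1 ≤ s0 := le_max_right _ _
      have : u - A0 + β ≤ s0 * β := by
        have := mul_le_mul_of_nonneg_right hs0ge (le_of_lt hβpos)
        calc u - A0 + β = ((u - A0) / β + 1) * β := by field_simp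
          _ ≤ s0 * β := this
      have h2 := hmemD x0 hx0 s0 hs0nn
      nlinarith
    rcases lt_or_eq_of_le hβle with hβneg | hβzero
    · -- case β < 0
      set ξ : Fin N → ℝ := fun n => (1/β) * c n with hξdef
      refine hclose α ξ ?_
      intro x hx
      have hstrict := hmemD x hx 0 le_rfl
      rw [add_zero] at hstrict
      have hβne : β ≠ 0 := ne_of_lt hβneg
      have hz : ∑ n, z n * ξ n = (1/β) * ∑ n, z n * c n := by
        rw [Finset.mul_sum]; exact Finset.sum_congr rfl fun n _ => by
          simp only [hξdef]; ring
      have hqx : ∑ n, Qᵀ.mulVec x n * ξ n = (1/β) * ∑ n, Qᵀ.mulVec x n * c n := by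
        rw [Finset.mul_sum]; exact Finset.sum_congr rfl fun n _ => by
          simp only [hξdef]; ring
      rw [lp_aux_key, hz, hqx]
      -- from hstrict and hfu' : A + qx*β < u < -Zc + αβ, divide by β < 0
      have hchain : (∑ n, Qᵀ.mulVec x n * c n) + (∑ j, q j * x j) * β
          < -(∑ n, z n * c n) + α * β := lt_trans hstrict hfu'
      set A := ∑ n, Qᵀ.mulVec x n * c n
      set Zc := ∑ n, z n * c n
      set qx := ∑ j, q j * x j
      have h2 : (1/β) * (-Zc + α * β) < (1/β) * (A + qx * β) :=
        mul_lt_mul_of_neg_left hchain (by simpa using one_div_neg.mpr hβneg)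
      have h3 : (1/β) * (-Zc + α * β) = -(1/β) * Zc + α := by field_simp
      have h4 : (1/β) * (A + qx * β) = (1/β) * A + qx := by field_simp
      rw [h3, h4] at h2
      linarith
    · -- case β = 0
      obtain ⟨xm, hxm, hmin⟩ := hXcomp.exists_isMinOn hXne (cont1 q).continuousOn
      set B := ∑ j, q j * xm j with hB
      have hBmin : ∀ x ∈ X, B ≤ ∑ j, q j * x j := fun x hx => hmin hx
      set Zc := ∑ n, z n * c n
      have hε : 0 < -Zc - u := by
        have h := hfu'
        rw [hβzero] at h
        simp only [mul_zero, add_zero] at h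
        linarith
      set ε := -Zc - u with hεdef
      set t0 : ℝ := max 0 ((α - B) / ε) with ht0
      have ht0nn : 0 ≤ t0 := le_max_left _ _
      have ht0ε : α - B ≤ t0 * ε := (div_le_iff₀ hε).mp (le_max_right _ _)
      set ξ : Fin N → ℝ := fun n => -t0 * c n with hξdef
      refine hclose α ξ ?_
      intro x hx
      have hAu : (∑ n, Qᵀ.mulVec x n * c n) < u := by
        have h := hmemD x hx 0 le_rfl
        rw [hβzero] at h
        simpa using h
      have hz : ∑ n, z n * ξ n = -t0 * Zc := by
        simp only [hξdef, Zc, Finset.mul_sum]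
        exact Finset.sum_congr rfl fun n _ => by ring
      have hqx : ∑ n, Qᵀ.mulVec x n * ξ n = -t0 * ∑ n, Qᵀ.mulVec x n * c n := by
        simp only [hξdef, Finset.mul_sum]
        exact Finset.sum_congr rfl fun n _ => by ring
      rw [lp_aux_key, hz, hqx]
      set A := ∑ n, Qᵀ.mulVec x n * c n
      have hAε : Zc + A < -ε := by simp only [hεdef] at *; linarith
      have h5 : t0 * (Zc + A) ≤ t0 * (-ε) :=
        mul_le_mul_of_nonneg_left (le_of_lt hAε) ht0nn
      have h6 : B ≤ ∑ j, q j * x j := hBmin x hx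
      nlinarith
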